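/- arXiv:2311.00857 — 4 statements merged into one kernel-verified Lean document; each statement's English description precedes it below -/
import Mathlib

section
/- Let k ≥ 2 be an integer and let K, G, H be graphs such that for every partition of the vertex set of G into k parts, some part induces a subgraph of G containing a copy of H. Let Γ be a k-partite graph on a vertex set V, let R be a graph on V, and suppose the edges of R are colored red and blue so that there is no red copy of K and no blue copy of H in R. Then the red/blue coloring of the union graph Γ ∪ R, in which every edge of Γ is colored blue and every edge of R not belonging to Γ keeps its original color, contains no red copy of K and no blue copy of G. -/
open SimpleGraph Filter

/-- The number of edges `e(G)` of a graph. -/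
noncomputable def numEdges {V : Type*} (G : SimpleGraph V) : ℕ := Nat.card G.edgeSet

/-- `d₂` evaluated on a (vertex count, edge count) pair : `0` if there are no edges,
`1/2` for a single edge (`v = 2`), and `(e-1)/(v-2)` otherwise. -/
noncomputable def dens2 (v e : ℕ) : ℝ :=
  if e = 0 then 0 else if v = 2 then 1 / 2 else ((e : ℝ) - 1) / ((v : ℝ) - 2)

/-- The 2-density `m₂(G) = max_{G' ⊆ G} d₂(G')`. -/
noncomputable def m2 {V : Type*} (G : SimpleGraph V) : ℝ :=
  sSup {x | ∃ G' : G.Subgraph, x = dens2 (Nat.card G'.verts) (Nat.card G'.edgeSet)}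

/-- The asymmetric density
`m₂(H₁,H₂) = max { e(H₁') / (v(H₁') - 2 + 1/m₂(H₂)) : H₁' ⊆ H₁, e(H₁') ≥ 1 }`. -/
noncomputable def m2Asym {V₁ V₂ : Type*} (H₁ : SimpleGraph V₁) (H₂ : SimpleGraph V₂) : ℝ :=
  sSup {x | ∃ H' : H₁.Subgraph, 1 ≤ Nat.card H'.edgeSet ∧
    x = (Nat.card H'.edgeSet : ℝ) / ((Nat.card H'.verts : ℝ) - 2 + 1 / m2 H₂)}

/-- `H₁` is strictly balanced with respect to `m₂(·,H₂)`: no proper subgraph with at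
least one edge attains the maximum in the definition of `m₂(H₁,H₂)`. -/
def StrictlyBalancedWrt {V₁ V₂ : Type*} (H₁ : SimpleGraph V₁) (H₂ : SimpleGraph V₂) : Prop :=
  ∀ H' : H₁.Subgraph, H' ≠ ⊤ → 1 ≤ Nat.card H'.edgeSet →
    (Nat.card H'.edgeSet : ℝ) / ((Nat.card H'.verts : ℝ) - 2 + 1 / m2 H₂) < m2Asym H₁ H₂

/-- `m(G) = max { e(F)/v(F) : F ⊆ G }`. -/
noncomputable def mDensity {V : Type*} (G : SimpleGraph V) : ℝ :=
  sSup {x | ∃ G' : G.Subgraph, x = (Nat.card G'.edgeSet : ℝ) / (Nat.card G'.verts : ℝ)}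

/-- `d(G) = e(G)/v(G)`. -/
noncomputable def edgeVertexRatio {V : Type*} (G : SimpleGraph V) : ℝ :=
  (numEdges G : ℝ) / (Nat.card V : ℝ)

/-- `G` contains a copy of `H` as a subgraph. -/
def ContainsCopy {W V : Type*} (H : SimpleGraph W) (G : SimpleGraph V) : Prop :=
  ∃ f : W ↪ V, ∀ a b, H.Adj a b → G.Adj (f a) (f b)

/-- `F` is `(H₁,H₂)`-Ramsey: every red/blue coloring of the edges of `F` (given by the
subgraph `R ≤ F` of red edges) yields a red copy of `H₁` or a blue copy of `H₂`. -/
def IsRamseyFor {W₁ W₂ V : Type*} (H₁ : SimpleGraph W₁) (H₂ : SimpleGraph W₂)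
    (F : SimpleGraph V) : Prop :=
  ∀ R : SimpleGraph V, R ≤ F → ContainsCopy H₁ R ∨ ContainsCopy H₂ (F \ R)

/-- The probability that the Erdős–Rényi random graph `G(n,p)` lies in the event `A`. -/
noncomputable def erProb (n : ℕ) (p : ℝ) (A : Set (SimpleGraph (Fin n))) : ℝ :=
  ∑ G : SimpleGraph (Fin n),
    Set.indicator A (fun G => p ^ numEdges G * (1 - p) ^ (n.choose 2 - numEdges G)) G

/-- The density of an `n`-vertex graph: its number of edges divided by `C(n,2)`. -/
noncomputable def graphDensity (n : ℕ) (G : SimpleGraph (Fin n)) : ℝ :=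
  (numEdges G : ℝ) / (n.choose 2 : ℝ)

/-- `phat` is the perturbed Ramsey threshold `p(n;H₁,H₂,d)`:
(i) if `p = ω(phat)` then for every sequence of `n`-vertex graphs of density at least `d`,
`Gₙ ∪ G(n,p)` is `(H₁,H₂)`-Ramsey whp; (ii) if `p = o(phat)` then for some such sequence,
`Gₙ ∪ G(n,p)` is whp not `(H₁,H₂)`-Ramsey. -/
def IsPerturbedRamseyThreshold {W₁ W₂ : Type*} (H₁ : SimpleGraph W₁) (H₂ : SimpleGraph W₂)
    (d : ℝ) (phat : ℕ → ℝ) : Prop :=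
  (∀ p : ℕ → ℝ, (∀ n, 0 ≤ p n ∧ p n ≤ 1) →
      Tendsto (fun n => p n / phat n) atTop atTop →
      ∀ Gseq : (n : ℕ) → SimpleGraph (Fin n),
        (∀ᶠ n in atTop, d ≤ graphDensity n (Gseq n)) →
        Tendsto (fun n => erProb n (p n) {R | IsRamseyFor H₁ H₂ (Gseq n ⊔ R)})
          atTop (nhds 1)) ∧
  (∀ p : ℕ → ℝ, (∀ n, 0 ≤ p n ∧ p n ≤ 1) →
      Tendsto (fun n => p n / phat n) atTop (nhds 0) →
      ∃ Gseq : (n : ℕ) → SimpleGraph (Fin n),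
        (∀ᶠ n in atTop, d ≤ graphDensity n (Gseq n)) ∧
        Tendsto (fun n => erProb n (p n) {R | ¬ IsRamseyFor H₁ H₂ (Gseq n ⊔ R)})
          atTop (nhds 1))

/-- `K_m'`: the complete graph on `Fin m` minus the maximum matching
`{0,1}, {2,3}, …`. -/
def cliqueMinusMatching (m : ℕ) : SimpleGraph (Fin m) :=
  SimpleGraph.fromRel (fun x y => x.val / 2 ≠ y.val / 2)

/-- The graph obtained from `T` by adding a new (apex) vertex `none` joined to the
vertices of `S`. -/
def apexGraph {VT : Type*} (T : SimpleGraph VT) (S : Set VT) : SimpleGraph (Option VT) :=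
  SimpleGraph.fromRel (fun x y =>
    (∃ a b, x = some a ∧ y = some b ∧ T.Adj a b) ∨ (x = none ∧ ∃ a ∈ S, y = some a))

/-- The star on `t` vertices (center `0`, leaves `1,…,t-1`) together with a new vertex `t`
adjacent to every vertex of the star. -/
def starPlusApex (t : ℕ) : SimpleGraph (Fin (t + 1)) :=
  SimpleGraph.fromRel (fun x y =>
    (x.val = 0 ∧ 1 ≤ y.val ∧ y.val < t) ∨ (x.val = t ∧ y.val < t))

open scoped Classical in
/-- The edge density `d(A,B) = e(A,B)/(|A|·|B|)` between two finite vertex sets. -/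
noncomputable def pairDensity {V : Type*} (G : SimpleGraph V) (A B : Finset V) : ℝ :=
  (((A ×ˢ B).filter (fun p => G.Adj p.1 p.2)).card : ℝ) / ((A.card : ℝ) * (B.card : ℝ))

/-- `(A,B)` is an `ε`-regular pair: for all `X ⊆ A`, `Y ⊆ B` with `|X| > ε|A|` and
`|Y| > ε|B|`, one has `|d(X,Y) - d(A,B)| < ε`. -/
def EpsRegularPair {V : Type*} (G : SimpleGraph V) (ε : ℝ) (A B : Finset V) : Prop :=
  ∀ X ⊆ A, ∀ Y ⊆ B, ε * (A.card : ℝ) < (X.card : ℝ) → ε * (B.card : ℝ) < (Y.card : ℝ) →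
    |pairDensity G X Y - pairDensity G A B| < ε


theorem stmt6 {VK VG VH V : Type*} (k : ℕ) (hk : 2 ≤ k)
    (K : SimpleGraph VK) (G : SimpleGraph VG) (H : SimpleGraph VH)
    -- every partition of `V(G)` into `k` parts has a part inducing a copy of `H`
    (hpart : ∀ P : VG → Fin k, ∃ i : Fin k, ContainsCopy H (G.induce {v | P v = i}))
    -- `Γ` is `k`-partite
    (Γ : SimpleGraph V) (hΓ : ∃ P : V → Fin k, ∀ x y, Γ.Adj x y → P x ≠ P y)
    -- a red/blue coloring of `R` (red subgraph `Rred`) with no red `K` and no blue `H`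
    (R Rred : SimpleGraph V) (hle : Rred ≤ R)
    (hK : ¬ ContainsCopy K Rred) (hH : ¬ ContainsCopy H (R \ Rred)) :
    -- coloring of `Γ ⊔ R`: edges of `Γ` blue, edges of `R` outside `Γ` keep their color
    ¬ ContainsCopy K (Rred \ Γ) ∧ ¬ ContainsCopy G (Γ ⊔ (R \ Rred)) := by
  obtain ⟨P, hP⟩ := hΓ
  constructor
  · rintro ⟨f, hf⟩
    exact hK ⟨f, fun a b hab => ((hf a b hab).1)⟩
  · rintro ⟨f, hf⟩
    obtain ⟨i, g, hg⟩ := hpart (fun v => P (f v))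
    refine hH ⟨⟨fun a => f (g a).1, fun a b hab => ?_⟩, fun a b hab => ?_⟩
    · exact g.injective (Subtype.ext (f.injective hab))
    · have hGadj : G.Adj (g a).1 (g b).1 := hg a b hab
      have h1 : (Γ ⊔ (R \ Rred)).Adj (f (g a).1) (f (g b).1) := hf _ _ hGadj
      have hsame : P (f (g a).1) = P (f (g b).1) := (g a).2.trans (g b).2.symm
      rcases h1 with h1 | h1
      · exact absurd hsame (hP _ _ h1)
      · exact h1
end

section
/- Let s, k be integers with 2 ≤ k < s/3. The graph obtained by taking k pairwise disjoint copies of K_{⌈s/k⌉}' and adding all edges between vertices of distinct copies contains K_s' as a subgraph. -/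
open SimpleGraph Filter

/-- Within a block starting at `q*m`, the re-indexing of offsets. -/
def gfun (m q r : ℕ) : ℕ :=
  if m % 2 = 1 ∧ q % 2 = 1 then (if r = 0 then m - 1 else r - 1) else r

lemma gfun_lt {m q r : ℕ} (hm : 0 < m) (hr : r < m) : gfun m q r < m := by
  unfold gfun; split
  · split <;> omega
  · omega

lemma gfun_inj {m q ra rb : ℕ} (hra : ra < m) (hrb : rb < m)
    (h : gfun m q ra = gfun m q rb) : ra = rb := by
  unfold gfun at h
  split_ifs at h <;> omega

lemma mul_mod_two (m q : ℕ) : (m * q) % 2 = if m % 2 = 1 ∧ q % 2 = 1 then 1 else 0 := by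
  rw [Nat.mul_mod]
  rcases Nat.mod_two_eq_zero_or_one m with h | h <;>
    rcases Nat.mod_two_eq_zero_or_one q with h' | h' <;> simp [h, h']

lemma gkey {m q ra rb T : ℕ} (hm : 3 ≤ m) (hra : ra < m) (hrb : rb < m)
    (hT : T % 2 = if m % 2 = 1 ∧ q % 2 = 1 then 1 else 0)
    (hd : (T + ra) / 2 ≠ (T + rb) / 2) :
    gfun m q ra / 2 ≠ gfun m q rb / 2 := by
  unfold gfun
  split_ifs at hT ⊢ <;> omega

theorem stmt12 (s k : ℕ) (hk : 2 ≤ k) (hks : 3 * k < s) :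
    ContainsCopy (cliqueMinusMatching s)
      (SimpleGraph.fromRel (fun x y : Fin ((s + k - 1) / k) × Fin k =>
        x.2 ≠ y.2 ∨ (x.2 = y.2 ∧ (cliqueMinusMatching ((s + k - 1) / k)).Adj x.1 y.1))) := by
  set m := (s + k - 1) / k with hmdef
  have hk0 : 0 < k := by omega
  have h1 : k * m + (s + k - 1) % k = s + k - 1 := by rw [hmdef]; exact Nat.div_add_mod _ _
  have h2 : (s + k - 1) % k < k := Nat.mod_lt _ hk0
  have hskm : s ≤ k * m := by
    generalize (s + k - 1) % k = r at h1 h2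
    generalize k * m = K at h1 ⊢
    omega
  have hm4 : 4 ≤ m := by
    rw [hmdef, Nat.le_div_iff_mul_le hk0]; omega
  have hm0 : 0 < m := by omega
  have hlt : ∀ i : Fin s, i.val / m < k := fun i =>
    Nat.div_lt_of_lt_mul (lt_of_lt_of_le i.isLt (hskm.trans_eq (Nat.mul_comm k m)))
  refine ⟨⟨fun i => (⟨gfun m (i.val / m) (i.val % m), gfun_lt hm0 (Nat.mod_lt _ hm0)⟩,
      ⟨i.val / m, hlt i⟩), ?_⟩, ?_⟩
  · -- injectivity
    intro a b hab
    have hq : a.val / m = b.val / m := congrArg (fun p => (p.2 : Fin k).val) hab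
    have hg : gfun m (a.val / m) (a.val % m) = gfun m (b.val / m) (b.val % m) :=
      congrArg (fun p => (p.1 : Fin m).val) hab
    rw [hq] at hg
    have hr : a.val % m = b.val % m := gfun_inj (Nat.mod_lt _ hm0) (Nat.mod_lt _ hm0) hg
    have : a.val = b.val := by
      rw [← Nat.div_add_mod a.val m, ← Nat.div_add_mod b.val m, hq, hr]
    exact Fin.ext this
  · -- adjacency
    intro a b hadj
    rw [cliqueMinusMatching, SimpleGraph.fromRel_adj] at hadj
    obtain ⟨hne, hd⟩ := hadj
    have hd : a.val / 2 ≠ b.val / 2 := hd.elim id Ne.symm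
    rw [SimpleGraph.fromRel_adj]
    by_cases hq : a.val / m = b.val / m
    · -- same block
      have hda : m * (a.val / m) + a.val % m = a.val := Nat.div_add_mod a.val m
      have hdb : m * (b.val / m) + b.val % m = b.val := Nat.div_add_mod b.val m
      have hd2 : (m * (a.val / m) + a.val % m) / 2 ≠ (m * (a.val / m) + b.val % m) / 2 := by
        rw [hda, hq, hdb]; exact hd
      have key : gfun m (a.val / m) (a.val % m) / 2 ≠ gfun m (a.val / m) (b.val % m) / 2 :=
        gkey (by omega) (Nat.mod_lt _ hm0) (Nat.mod_lt _ hm0)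
          (mul_mod_two m (a.val / m)) hd2
      have e : gfun m (a.val / m) (b.val % m) = gfun m (b.val / m) (b.val % m) := by
        rw [hq]
      have key' : gfun m (a.val / m) (a.val % m) / 2 ≠ gfun m (b.val / m) (b.val % m) / 2 := by
        rw [← e]; exact key
      have hgne : gfun m (a.val / m) (a.val % m) ≠ gfun m (b.val / m) (b.val % m) :=
        fun h => key' (by rw [h])
      constructor
      · intro h
        exact hgne (congrArg (fun p => (p.1 : Fin m).val) h)
      · refine Or.inl (Or.inr ⟨Fin.ext hq, ?_⟩)
        rw [cliqueMinusMatching, SimpleGraph.fromRel_adj]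
        exact ⟨fun h => hgne (congrArg Fin.val h), Or.inl key'⟩
    · -- different blocks
      refine ⟨fun h => hq (congrArg (fun p => (p.2 : Fin k).val) h), Or.inl (Or.inl ?_)⟩
      exact fun h => hq (congrArg Fin.val h)
end

section
/- Let s, t, k be integers with 2 ≤ k < s/3 and t ≥ s ≥ 7. Then m_2(K_t, K_{⌈s/k⌉}') ≥ m_2(K_{t-1}, K_s'), m_2(K_{t-1}) ≥ m_2(K_s'), and K_{t-1} is strictly balanced with respect to m_2(·, K_s'). -/
open SimpleGraph Filter

section AuxSB

open scoped Classical

lemma sb_subgraph_finite {V : Type*} [Finite V] (G : SimpleGraph V) : Finite G.Subgraph := by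
  apply Finite.of_injective (fun H : G.Subgraph => (H.verts, H.Adj))
  intro H₁ H₂ h
  exact SimpleGraph.Subgraph.ext (congrArg Prod.fst h) (congrArg Prod.snd h)

lemma sb_m2_set_finite {V : Type*} [Finite V] (G : SimpleGraph V) :
    {x | ∃ G' : G.Subgraph, x = dens2 (Nat.card G'.verts) (Nat.card G'.edgeSet)}.Finite := by
  have := sb_subgraph_finite G
  have h : {x | ∃ G' : G.Subgraph, x = dens2 (Nat.card G'.verts) (Nat.card G'.edgeSet)}
      = Set.range (fun G' : G.Subgraph => dens2 (Nat.card G'.verts) (Nat.card G'.edgeSet)) := by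
    ext x; simp [Set.mem_range, eq_comm]
  rw [h]
  exact Set.finite_range _

lemma sb_m2asym_set_finite {V₁ V₂ : Type*} [Finite V₁] (H₁ : SimpleGraph V₁)
    (H₂ : SimpleGraph V₂) :
    {x | ∃ H' : H₁.Subgraph, 1 ≤ Nat.card H'.edgeSet ∧
      x = (Nat.card H'.edgeSet : ℝ) / ((Nat.card H'.verts : ℝ) - 2 + 1 / m2 H₂)}.Finite := by
  have := sb_subgraph_finite H₁
  apply Set.Finite.subset (Set.finite_range
    (fun H' : H₁.Subgraph =>
      (Nat.card H'.edgeSet : ℝ) / ((Nat.card H'.verts : ℝ) - 2 + 1 / m2 H₂)))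
  rintro x ⟨H', _, rfl⟩
  exact ⟨H', rfl⟩

lemma sb_card_edge_le {V : Type*} [Fintype V] {G : SimpleGraph V} (H : G.Subgraph) :
    Nat.card H.edgeSet ≤ (Nat.card H.verts).choose 2 := by
  have h1 : Sym2.map (↑) '' H.coe.edgeSet = H.edgeSet := H.image_coe_edgeSet_coe
  have h2 : Nat.card H.edgeSet = Nat.card H.coe.edgeSet := by
    rw [← h1, Nat.card_coe_set_eq, Nat.card_coe_set_eq,
      Set.ncard_image_of_injective _ (Sym2.map.injective Subtype.coe_injective)]
  rw [h2, Nat.card_eq_fintype_card, ← Set.toFinset_card, Nat.card_eq_fintype_card]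
  exact H.coe.card_edgeFinset_le_card_choose_two

lemma sb_two_le_verts {V : Type*} [Fintype V] {G : SimpleGraph V} (H : G.Subgraph)
    (he : 1 ≤ Nat.card H.edgeSet) : 2 ≤ Nat.card H.verts := by
  have hne : (H.edgeSet).Nonempty := by
    rw [Set.nonempty_iff_ne_empty]
    intro h
    rw [Nat.card_coe_set_eq, h, Set.ncard_empty] at he
    omega
  obtain ⟨e, he'⟩ := hne
  induction e with
  | _ x y =>
    rw [SimpleGraph.Subgraph.mem_edgeSet] at he'
    have hxy : x ≠ y := (G.ne_of_adj (H.adj_sub he'))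
    have hx := H.edge_vert he'
    have hy := H.edge_vert he'.symm
    rw [Nat.card_coe_set_eq]
    have h2 : ({x, y} : Set V).ncard ≤ H.verts.ncard :=
      Set.ncard_le_ncard (by simp [Set.insert_subset_iff, hx, hy]) H.verts.toFinite
    rwa [Set.ncard_pair hxy] at h2

lemma sb_verts_le_card {V : Type*} [Fintype V] {G : SimpleGraph V} (H : G.Subgraph) :
    Nat.card H.verts ≤ Fintype.card V := by
  rw [Nat.card_coe_set_eq, ← Nat.card_eq_fintype_card, ← Set.ncard_univ]
  exact Set.ncard_le_ncard (Set.subset_univ H.verts) Set.finite_univ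

lemma sb_verts_top_card {V : Type*} [Fintype V] {G : SimpleGraph V} :
    Nat.card (⊤ : G.Subgraph).verts = Fintype.card V := by
  rw [SimpleGraph.Subgraph.verts_top, Nat.card_coe_set_eq, Set.ncard_univ,
    Nat.card_eq_fintype_card]

lemma sb_edge_top_card {V : Type*} [Fintype V] [DecidableEq V] :
    Nat.card (⊤ : (⊤ : SimpleGraph V).Subgraph).edgeSet = (Fintype.card V).choose 2 := by
  rw [SimpleGraph.Subgraph.edgeSet_top, Nat.card_eq_fintype_card, ← Set.toFinset_card,
    ← SimpleGraph.edgeFinset]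
  exact SimpleGraph.card_edgeFinset_top_eq_card_choose_two

lemma sb_edge_lt_of_ne_top {V : Type*} [Fintype V] [DecidableEq V]
    (H : (⊤ : SimpleGraph V).Subgraph)
    (hne : H ≠ ⊤) (hverts : Nat.card H.verts = Fintype.card V) :
    Nat.card H.edgeSet < (Fintype.card V).choose 2 := by
  have hv : H.verts = Set.univ := by
    rw [Nat.card_coe_set_eq] at hverts
    apply Set.eq_of_subset_of_ncard_le (Set.subset_univ _)
    rw [Set.ncard_univ, Nat.card_eq_fintype_card, hverts]
  have hadj : ∃ x y, x ≠ y ∧ ¬ H.Adj x y := by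
    by_contra h
    push_neg at h
    apply hne
    ext x y
    · simp [hv, SimpleGraph.Subgraph.verts_top]
    · constructor
      · intro hxy; exact SimpleGraph.Subgraph.adj_sub _ hxy
      · intro hxy
        simp only [SimpleGraph.Subgraph.top_adj, SimpleGraph.top_adj] at hxy ⊢
        exact h x y hxy
  obtain ⟨x, y, hxy, hnadj⟩ := hadj
  have hss : H.edgeSet ⊂ (⊤ : SimpleGraph V).edgeSet := by
    constructor
    · exact H.edgeSet_subset
    · intro hsub
      have hm : s(x,y) ∈ (⊤ : SimpleGraph V).edgeSet := by simp [hxy]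
      exact hnadj (SimpleGraph.Subgraph.mem_edgeSet.mp (hsub hm))
  have hlt := Set.ncard_lt_ncard hss (Set.toFinite _)
  rw [Nat.card_coe_set_eq]
  calc H.edgeSet.ncard < (⊤ : SimpleGraph V).edgeSet.ncard := hlt
    _ = (Fintype.card V).choose 2 := by
        rw [Set.ncard_eq_toFinset_card', ← SimpleGraph.edgeFinset]
        exact SimpleGraph.card_edgeFinset_top_eq_card_choose_two

lemma sb_cmm_adj {m : ℕ} {x y : Fin m} :
    (cliqueMinusMatching m).Adj x y ↔ x.val / 2 ≠ y.val / 2 := by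
  simp only [cliqueMinusMatching, fromRel_adj]
  constructor
  · rintro ⟨h1, h2 | h2⟩ <;> omega
  · intro h; exact ⟨by intro hh; exact h (by rw [hh]), Or.inl h⟩

def sbVtx (s n : ℕ) (hs : 0 < s) : Fin s := ⟨min n (s-1), by omega⟩

lemma sbVtx_val (s n : ℕ) (hs : 0 < s) : (sbVtx s n hs).val = min n (s-1) := rfl

lemma sb_matching_count (s : ℕ) (hs : 0 < s) (H : (cliqueMinusMatching s).Subgraph) :
    Nat.card H.edgeSet + s / 2 ≤ (Nat.card H.verts).choose 2 + (s - Nat.card H.verts) := by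
  let vtx : ℕ → Fin s := fun n => sbVtx s n hs
  have hbound : ∀ i, i ∈ Finset.range (s/2) → 2*i < s ∧ 2*i+1 < s := by
    intro i hi; rw [Finset.mem_range] at hi; omega
  set P := (Finset.range (s/2)).filter (fun i => vtx (2*i) ∈ H.verts ∧ vtx (2*i+1) ∈ H.verts) with hP
  set P' := (Finset.range (s/2)).filter (fun i => ¬(vtx (2*i) ∈ H.verts ∧ vtx (2*i+1) ∈ H.verts)) with hP'
  have hsplit : P.card + P'.card = s / 2 := by
    rw [hP, hP', Finset.card_filter_add_card_filter_not, Finset.card_range]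
  have hV : Nat.card H.verts = H.verts.toFinset.card := by
    rw [Nat.card_coe_set_eq, Set.ncard_eq_toFinset_card']
  have ha : P'.card ≤ s - Nat.card H.verts := by
    have h1 : P'.card ≤ (H.verts.toFinsetᶜ).card := by
      apply Finset.card_le_card_of_injOn
        (fun i => if vtx (2*i) ∈ H.verts then vtx (2*i+1) else vtx (2*i))
      · intro i hi
        rw [hP', Finset.mem_coe, Finset.mem_filter] at hi
        obtain ⟨hir, hin⟩ := hi
        simp only [Finset.mem_coe, Finset.mem_compl, Set.mem_toFinset]
        by_cases h1 : vtx (2*i) ∈ H.verts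
        · simp only [if_pos h1]; tauto
        · simp only [if_neg h1]; exact h1
      · intro i hi j hj hij
        simp only [Finset.mem_coe, hP', Finset.mem_filter] at hi hj
        obtain ⟨h2i, h2i1⟩ := hbound i hi.1
        obtain ⟨h2j, h2j1⟩ := hbound j hj.1
        have hij' : (if vtx (2*i) ∈ H.verts then vtx (2*i+1) else vtx (2*i)) =
            (if vtx (2*j) ∈ H.verts then vtx (2*j+1) else vtx (2*j)) := hij
        have e1 := congrArg Fin.val hij'
        by_cases c1 : vtx (2*i) ∈ H.verts <;> by_cases c2 : vtx (2*j) ∈ H.verts <;>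
          simp only [if_pos, if_neg, c1, c2, if_true, if_false, sbVtx_val, vtx] at e1 <;> omega
    rw [Finset.card_compl, Fintype.card_fin] at h1
    rw [hV]
    omega
  have hb : Nat.card H.edgeSet + P.card ≤ (Nat.card H.verts).choose 2 := by
    set D := ((⊤ : SimpleGraph ↥H.verts).edgeFinset).image
      (Sym2.map (Subtype.val : ↥H.verts → Fin s)) with hD
    have hDcard : D.card = (Nat.card H.verts).choose 2 := by
      rw [hD, Finset.card_image_of_injective _ (Sym2.map.injective Subtype.coe_injective),
        SimpleGraph.card_edgeFinset_top_eq_card_choose_two, Nat.card_eq_fintype_card]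
    set Ef := H.edgeSet.toFinset with hEf
    have hEfcard : Ef.card = Nat.card H.edgeSet := by
      rw [hEf, Set.toFinset_card, Nat.card_eq_fintype_card]
    set pairFn : ℕ → Sym2 (Fin s) := fun i => s(vtx (2*i), vtx (2*i+1)) with hpairFn
    set Pf := P.image pairFn with hPf
    have hPfcard : Pf.card = P.card := by
      rw [hPf]
      apply Finset.card_image_of_injOn
      intro i hi j hj hij
      simp only [Finset.mem_coe, hP, Finset.mem_filter] at hi hj
      obtain ⟨h2i, h2i1⟩ := hbound i hi.1
      obtain ⟨h2j, h2j1⟩ := hbound j hj.1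
      have hij' : s(vtx (2*i), vtx (2*i+1)) = s(vtx (2*j), vtx (2*j+1)) := hij
      rw [Sym2.eq_iff] at hij'
      rcases hij' with ⟨h1, h2⟩ | ⟨h1, h2⟩ <;>
        · have e1 := congrArg Fin.val h1
          have e2 := congrArg Fin.val h2
          simp only [sbVtx_val, vtx] at e1 e2
          omega
    have hmemD : ∀ x y : Fin s, x ≠ y → x ∈ H.verts → y ∈ H.verts → s(x,y) ∈ D := by
      intro x y hxy hx hy
      rw [hD, Finset.mem_image]
      refine ⟨s(⟨x, hx⟩, ⟨y, hy⟩), ?_, by rw [Sym2.map_pair_eq]⟩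
      rw [SimpleGraph.mem_edgeFinset, SimpleGraph.mem_edgeSet, SimpleGraph.top_adj]
      intro h; exact hxy (congrArg Subtype.val h)
    have hEfD : Ef ⊆ D := by
      intro e he
      rw [hEf, Set.mem_toFinset] at he
      induction e with
      | _ x y =>
        rw [SimpleGraph.Subgraph.mem_edgeSet] at he
        exact hmemD x y ((cliqueMinusMatching s).ne_of_adj (H.adj_sub he))
          (H.edge_vert he) (H.edge_vert he.symm)
    have hPfD : Pf ⊆ D := by
      intro e he
      rw [hPf, Finset.mem_image] at he
      obtain ⟨i, hi, rfl⟩ := he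
      rw [hP, Finset.mem_filter] at hi
      obtain ⟨h2i, h2i1⟩ := hbound i hi.1
      apply hmemD _ _ ?_ hi.2.1 hi.2.2
      intro h
      have e1 := congrArg Fin.val h
      simp only [sbVtx_val, vtx] at e1
      omega
    have hdisj : Disjoint Ef Pf := by
      rw [Finset.disjoint_right]
      intro e he
      rw [hPf, Finset.mem_image] at he
      obtain ⟨i, hi, rfl⟩ := he
      rw [hP, Finset.mem_filter] at hi
      obtain ⟨h2i, h2i1⟩ := hbound i hi.1
      rw [hEf, Set.mem_toFinset, hpairFn, SimpleGraph.Subgraph.mem_edgeSet]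
      intro h
      have hadj := sb_cmm_adj.mp (H.adj_sub h)
      simp only [sbVtx_val, vtx] at hadj
      omega
    calc Nat.card H.edgeSet + P.card = (Ef ∪ Pf).card := by
          rw [Finset.card_union_of_disjoint hdisj, hEfcard, hPfcard]
      _ ≤ D.card := Finset.card_le_card (Finset.union_subset hEfD hPfD)
      _ = (Nat.card H.verts).choose 2 := hDcard
  omega

def sbP3 (m : ℕ) (hm : 3 ≤ m) : (cliqueMinusMatching m).Subgraph where
  verts := {⟨0, by omega⟩, ⟨1, by omega⟩, ⟨2, by omega⟩}
  Adj x y := ((x = ⟨0, by omega⟩ ∨ x = ⟨1, by omega⟩) ∧ y = ⟨2, by omega⟩) ∨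
    (x = ⟨2, by omega⟩ ∧ (y = ⟨0, by omega⟩ ∨ y = ⟨1, by omega⟩))
  adj_sub := by
    rintro x y (⟨(rfl | rfl), rfl⟩ | ⟨rfl, (rfl | rfl)⟩) <;> rw [sb_cmm_adj] <;> simp
  edge_vert := by
    rintro x y (⟨(rfl | rfl), rfl⟩ | ⟨rfl, (rfl | rfl)⟩) <;> simp
  symm := by
    constructor
    rintro x y (⟨(rfl | rfl), rfl⟩ | ⟨rfl, (rfl | rfl)⟩) <;> tauto

lemma sbP3_verts_card (m : ℕ) (hm : 3 ≤ m) : Nat.card (sbP3 m hm).verts = 3 := by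
  rw [Nat.card_coe_set_eq, Set.ncard_eq_three]
  refine ⟨_, _, _, ?_, ?_, ?_, rfl⟩ <;> intro h <;>
    simpa using congrArg Fin.val h

lemma sbP3_edge_card (m : ℕ) (hm : 3 ≤ m) : Nat.card (sbP3 m hm).edgeSet = 2 := by
  have hset : (sbP3 m hm).edgeSet =
      {s((⟨0, by omega⟩ : Fin m), (⟨2, by omega⟩ : Fin m)),
       s((⟨1, by omega⟩ : Fin m), (⟨2, by omega⟩ : Fin m))} := by
    ext e
    induction e with
    | _ x y =>
      rw [SimpleGraph.Subgraph.mem_edgeSet]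
      show (((x = _ ∨ x = _) ∧ y = _) ∨ (x = _ ∧ (y = _ ∨ y = _))) ↔ _
      constructor
      · rintro (⟨(rfl | rfl), rfl⟩ | ⟨rfl, (rfl | rfl)⟩) <;> simp [Sym2.eq_iff]
      · intro h
        simp only [Set.mem_insert_iff, Set.mem_singleton_iff, Sym2.eq_iff] at h
        rcases h with (⟨rfl, rfl⟩|⟨rfl,rfl⟩)|(⟨rfl,rfl⟩|⟨rfl,rfl⟩) <;> tauto
  rw [hset, Nat.card_coe_set_eq, Set.ncard_pair]
  intro h
  rw [Sym2.eq_iff] at h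
  rcases h with ⟨h,_⟩|⟨h,_⟩ <;> simpa using congrArg Fin.val h

lemma sb_one_le_m2_cmm (m : ℕ) (hm : 3 ≤ m) : 1 ≤ m2 (cliqueMinusMatching m) := by
  have hfin := sb_m2_set_finite (cliqueMinusMatching m)
  have hmem : (1:ℝ) ∈ {x | ∃ G' : (cliqueMinusMatching m).Subgraph,
      x = dens2 (Nat.card G'.verts) (Nat.card G'.edgeSet)} := by
    refine ⟨sbP3 m hm, ?_⟩
    rw [sbP3_verts_card, sbP3_edge_card]
    norm_num [dens2]
  exact le_csSup hfin.bddAbove hmem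

lemma sb_lem_v2 {n c : ℝ} (hn : 6 ≤ n) (hc0 : 0 < c) (hcn : 2/(n+1) < c) :
    1/c < n*(n-1)/2/(n-2+c) := by
  have hd : 0 < n - 2 + c := by linarith
  have h1 : 2 < c * (n+1) := by
    rw [div_lt_iff₀ (by linarith)] at hcn
    linarith
  rw [div_lt_div_iff₀ hc0 hd]
  nlinarith [mul_pos hc0 hd]

lemma sb_lem_mono_strict {v n c : ℝ} (h3 : 3 ≤ v) (hvn : v + 1 ≤ n) (hc0 : 0 < c) :
    v*(v-1)/2/(v-2+c) < n*(n-1)/2/(n-2+c) := by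
  have hd1 : 0 < v - 2 + c := by linarith
  have hd2 : 0 < n - 2 + c := by linarith
  have hb : 0 ≤ (n - v) * ((n-2)*(v-2) - 2) := by
    apply mul_nonneg (by linarith)
    nlinarith [mul_nonneg (by linarith : (0:ℝ) ≤ n-2) (by linarith : (0:ℝ) ≤ v-3)]
  have hp : 0 < (n - v) * (c * (n + v - 1)) := by
    apply mul_pos (by linarith)
    apply mul_pos hc0 (by linarith)
  rw [div_lt_div_iff₀ hd1 hd2]
  nlinarith [hb, hp]

lemma sb_lem_bridge {n c c' : ℝ} (hn : 6 ≤ n) (hc0 : 0 < c) (hc' : 0 < c') (hc'1 : c' ≤ 1)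
    (h2 : 2 < c*(n+1)) :
    n*(n-1)/2/(n-2+c) ≤ (n+1)*n/2/(n-1+c') := by
  have hd1 : 0 < n - 2 + c := by linarith
  have hd2 : 0 < n - 1 + c' := by linarith
  rw [div_le_div_iff₀ hd1 hd2]
  nlinarith [mul_nonneg (by linarith : (0:ℝ) ≤ n-1) (by linarith : (0:ℝ) ≤ 1 - c'),
    mul_pos (by linarith : (0:ℝ) < n) hc0]

lemma sb_m2_cmm_le (s : ℕ) (hs : 7 ≤ s) :
    m2 (cliqueMinusMatching s) ≤ (s:ℝ)/2 - 1/(2*((s:ℝ)-2)) := by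
  have hs2 : (0:ℝ) < (s:ℝ) - 2 := by
    have : (7:ℝ) ≤ (s:ℝ) := by exact_mod_cast hs
    linarith
  have hs7 : (7:ℝ) ≤ (s:ℝ) := by exact_mod_cast hs
  have hδ1 : 1/(2*((s:ℝ)-2)) ≤ 1 := by
    rw [div_le_one (by linarith)]
    linarith
  have hδ0 : 0 < 1/(2*((s:ℝ)-2)) := by positivity
  apply csSup_le
  · exact ⟨_, ⟨⊥, rfl⟩⟩
  rintro x ⟨H, rfl⟩
  set v := Nat.card H.verts with hv
  set e := Nat.card H.edgeSet with he
  unfold dens2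
  split_ifs with h1 h2
  · linarith
  · linarith
  · have he1 : 1 ≤ e := Nat.one_le_iff_ne_zero.mpr h1
    have hv2 : 2 ≤ v := sb_two_le_verts H he1
    have hv3 : 3 ≤ v := by omega
    have hvs : v ≤ s := by
      have := sb_verts_le_card H
      rwa [Fintype.card_fin] at this
    have hmc := sb_matching_count s (by omega) H
    rw [← hv, ← he] at hmc
    have hkey : 2*e + s ≤ 2*(v.choose 2) + 2*(s-v) + 1 := by omega
    have hchoose : ((v.choose 2 : ℕ) : ℝ) = (v:ℝ)*((v:ℝ)-1)/2 := by
      rw [Nat.cast_choose_two]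
    have hkeyR : 2*(e:ℝ) + (s:ℝ) ≤ (v:ℝ)*((v:ℝ)-1) + 2*((s:ℝ)-(v:ℝ)) + 1 := by
      have := (Nat.cast_le (α := ℝ)).mpr hkey
      push_cast [Nat.cast_sub hvs] at this
      rw [hchoose] at this
      linarith
    have hv3R : (3:ℝ) ≤ (v:ℝ) := by exact_mod_cast hv3
    have hvsR : (v:ℝ) ≤ (s:ℝ) := by exact_mod_cast hvs
    rw [div_le_iff₀ (by linarith : (0:ℝ) < (v:ℝ) - 2)]
    set δ := 1/(2*((s:ℝ)-2)) with hδ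
    have hδeq : δ * (2*((s:ℝ)-2)) = 1 := by
      rw [hδ]; field_simp
    nlinarith [mul_nonneg (by linarith : (0:ℝ) ≤ (s:ℝ)-(v:ℝ)) (by linarith : (0:ℝ) ≤ (v:ℝ)-3),
      mul_nonneg hδ0.le (by linarith : (0:ℝ) ≤ (s:ℝ)-(v:ℝ))]

lemma sb_m2_top_ge (n : ℕ) (hn : 3 ≤ n) :
    ((n:ℝ)+1)/2 ≤ m2 (⊤ : SimpleGraph (Fin n)) := by
  have hfin := sb_m2_set_finite (⊤ : SimpleGraph (Fin n))
  apply le_csSup hfin.bddAbove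
  refine ⟨⊤, ?_⟩
  rw [sb_verts_top_card, sb_edge_top_card, Fintype.card_fin]
  unfold dens2
  have hch : n.choose 2 ≠ 0 := (Nat.choose_pos (by omega : 2 ≤ n)).ne'
  rw [if_neg hch, if_neg (by omega)]
  rw [Nat.cast_choose_two]
  have h3 : (3:ℝ) ≤ (n:ℝ) := by exact_mod_cast hn
  rw [eq_div_iff (by linarith : (0:ℝ) < (n:ℝ)-2).ne']
  ring
end AuxSB

theorem stmt14 (s t k : ℕ) (hk : 2 ≤ k) (hks : 3 * k < s) (hst : s ≤ t) (hs : 7 ≤ s) :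
    m2Asym (⊤ : SimpleGraph (Fin (t - 1))) (cliqueMinusMatching s) ≤
      m2Asym (⊤ : SimpleGraph (Fin t)) (cliqueMinusMatching ((s + k - 1) / k)) ∧
    m2 (cliqueMinusMatching s) ≤ m2 (⊤ : SimpleGraph (Fin (t - 1))) ∧
    StrictlyBalancedWrt (⊤ : SimpleGraph (Fin (t - 1))) (cliqueMinusMatching s) := by
  classical
  have ht7 : 7 ≤ t := le_trans hs hst
  set n := t - 1 with hn
  have hn6 : 6 ≤ n := by omega
  have hnR : (n:ℝ) = (t:ℝ) - 1 := by
    rw [hn, Nat.cast_sub (by omega : 1 ≤ t)]; norm_num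
  have hn6R : (6:ℝ) ≤ (n:ℝ) := by exact_mod_cast hn6
  have htR7 : (7:ℝ) ≤ (t:ℝ) := by exact_mod_cast ht7
  set μ := m2 (cliqueMinusMatching s) with hμdef
  have hμ1 : 1 ≤ μ := sb_one_le_m2_cmm s (by omega)
  have hμ0 : 0 < μ := by linarith
  have hsR : (7:ℝ) ≤ (s:ℝ) := by exact_mod_cast hs
  have hstR : (s:ℝ) ≤ (t:ℝ) := by exact_mod_cast hst
  have hμup : μ < (t:ℝ)/2 := by
    have h1 := sb_m2_cmm_le s hs
    have h2 : 0 < 1/(2*((s:ℝ)-2)) := by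
      apply one_div_pos.mpr; linarith
    rw [← hμdef] at h1
    linarith
  have hc0 : 0 < 1/μ := one_div_pos.mpr hμ0
  have hc1 : 1/μ ≤ 1 := by rw [div_le_one hμ0]; linarith
  have hct : 2/(t:ℝ) < 1/μ := by
    rw [div_lt_div_iff₀ (by linarith) hμ0]
    linarith
  have hctn : 2/((n:ℝ)+1) < 1/μ := by rw [hnR]; convert hct using 3; ring
  have hct2 : 2 < (1/μ)*((n:ℝ)+1) := by
    rw [div_lt_iff₀ (by linarith : (0:ℝ) < (n:ℝ)+1)] at hctn
    linarith
  set m := (s + k - 1)/k with hm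
  have hm4 : 4 ≤ m := by
    rw [hm, Nat.le_div_iff_mul_le (by omega)]; omega
  set μ' := m2 (cliqueMinusMatching m) with hμ'def
  have hμ'1 : 1 ≤ μ' := sb_one_le_m2_cmm _ (by omega)
  have hμ'0 : 0 < μ' := by linarith
  have hc'0 : 0 < 1/μ' := one_div_pos.mpr hμ'0
  have hc'1 : 1/μ' ≤ 1 := by rw [div_le_one hμ'0]; linarith
  -- value of the asym set for a ⊤ subgraph
  have hasym_ge : ∀ (N : ℕ) (H₂ : Type) (G₂ : SimpleGraph H₂), 2 ≤ N →
      ((N:ℝ)*((N:ℝ)-1)/2)/((N:ℝ)-2+1/m2 G₂) ≤ m2Asym (⊤ : SimpleGraph (Fin N)) G₂ := by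
    intro N H₂ G₂ hN
    apply le_csSup (sb_m2asym_set_finite _ _).bddAbove
    refine ⟨⊤, ?_, ?_⟩
    · rw [sb_edge_top_card, Fintype.card_fin]
      exact Nat.choose_pos hN
    · rw [sb_edge_top_card, sb_verts_top_card, Fintype.card_fin, Nat.cast_choose_two]
  -- per-element bounds for subgraphs of the complete graph on Fin n
  have helem : ∀ H' : (⊤ : SimpleGraph (Fin n)).Subgraph, 1 ≤ Nat.card H'.edgeSet →
      (Nat.card H'.edgeSet : ℝ)/((Nat.card H'.verts : ℝ)-2+1/μ) ≤
        ((n:ℝ)*((n:ℝ)-1)/2)/((n:ℝ)-2+1/μ) ∧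
      (H' ≠ ⊤ → (Nat.card H'.edgeSet : ℝ)/((Nat.card H'.verts : ℝ)-2+1/μ) <
        ((n:ℝ)*((n:ℝ)-1)/2)/((n:ℝ)-2+1/μ)) := by
    intro H' he
    set v := Nat.card H'.verts with hv
    set e := Nat.card H'.edgeSet with hedge
    have hv2 : 2 ≤ v := sb_two_le_verts H' he
    have hvn : v ≤ n := by
      have := sb_verts_le_card H'
      rwa [Fintype.card_fin] at this
    have hev : e ≤ v.choose 2 := sb_card_edge_le H'
    have hvnR : (v:ℝ) ≤ (n:ℝ) := by exact_mod_cast hvn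
    have heR : (1:ℝ) ≤ (e:ℝ) := by exact_mod_cast he
    by_cases hveq2 : v = 2
    · have he1 : e = 1 := by
        rw [hveq2] at hev; simp [Nat.choose] at hev; omega
      have hval : (e:ℝ)/((v:ℝ)-2+1/μ) = 1/(1/μ) := by
        rw [he1, hveq2]; norm_num
      have := sb_lem_v2 hn6R hc0 hctn
      constructor
      · rw [hval]; linarith
      · intro _; rw [hval]; linarith
    · have hv3 : 3 ≤ v := by omega
      have hv3R : (3:ℝ) ≤ (v:ℝ) := by exact_mod_cast hv3
      have hdv : (0:ℝ) < (v:ℝ)-2+1/μ := by linarith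
      have hnum : (e:ℝ) ≤ (v:ℝ)*((v:ℝ)-1)/2 := by
        calc (e:ℝ) ≤ ((v.choose 2 : ℕ):ℝ) := by exact_mod_cast hev
          _ = (v:ℝ)*((v:ℝ)-1)/2 := by rw [Nat.cast_choose_two]
      have hstep1 : (e:ℝ)/((v:ℝ)-2+1/μ) ≤ ((v:ℝ)*((v:ℝ)-1)/2)/((v:ℝ)-2+1/μ) :=
        (div_le_div_iff_of_pos_right hdv).mpr hnum
      by_cases hveqn : v = n
      · -- full vertex set
        constructor
        · refine le_trans hstep1 ?_
          rw [hveqn]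
        · intro hne
          have hlt : e < n.choose 2 := by
            have := sb_edge_lt_of_ne_top H' hne (by rw [← hv, hveqn, Fintype.card_fin])
            rwa [Fintype.card_fin] at this
          have hltR : (e:ℝ) < (n:ℝ)*((n:ℝ)-1)/2 := by
            calc (e:ℝ) < ((n.choose 2 : ℕ):ℝ) := by exact_mod_cast hlt
              _ = (n:ℝ)*((n:ℝ)-1)/2 := by rw [Nat.cast_choose_two]
          have hdn : (0:ℝ) < (n:ℝ)-2+1/μ := by linarith
          have := (div_lt_div_iff_of_pos_right hdn).mpr hltR
          rw [← hv, hveqn] at *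
          exact this
      · have hvltn : v + 1 ≤ n := by omega
        have hvltnR : (v:ℝ) + 1 ≤ (n:ℝ) := by exact_mod_cast hvltn
        have hmono := sb_lem_mono_strict hv3R hvltnR hc0
        constructor
        · exact le_trans hstep1 hmono.le
        · intro _; exact lt_of_le_of_lt hstep1 hmono
  -- Claim 2
  have hm2top : ((n:ℝ)+1)/2 ≤ m2 (⊤ : SimpleGraph (Fin n)) := sb_m2_top_ge n (by omega)
  have claim2 : μ ≤ m2 (⊤ : SimpleGraph (Fin n)) := by
    have : (t:ℝ)/2 = ((n:ℝ)+1)/2 := by rw [hnR]; ring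
    linarith
  -- upper bound on m2Asym over Fin n
  have hasym_le : m2Asym (⊤ : SimpleGraph (Fin n)) (cliqueMinusMatching s) ≤
      ((n:ℝ)*((n:ℝ)-1)/2)/((n:ℝ)-2+1/μ) := by
    apply csSup_le
    · refine ⟨_, ⟨⊤, ?_, rfl⟩⟩
      rw [sb_edge_top_card, Fintype.card_fin]
      exact Nat.choose_pos (by omega)
    · rintro x ⟨H', he, rfl⟩
      exact (helem H' he).1
  have hbridge : ((n:ℝ)*((n:ℝ)-1)/2)/((n:ℝ)-2+1/μ) ≤
      ((t:ℝ)*((t:ℝ)-1)/2)/((t:ℝ)-2+1/μ') := by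
    have hb := sb_lem_bridge hn6R hc0 hc'0 hc'1 hct2
    have h1 : ((n:ℝ)+1)*(n:ℝ) = (t:ℝ)*((t:ℝ)-1) := by rw [hnR]; ring
    have h2 : (n:ℝ)-1+1/μ' = (t:ℝ)-2+1/μ' := by rw [hnR]; ring
    rw [h1, h2] at hb
    exact hb
  have claim1 : m2Asym (⊤ : SimpleGraph (Fin n)) (cliqueMinusMatching s) ≤
      m2Asym (⊤ : SimpleGraph (Fin t)) (cliqueMinusMatching m) := by
    refine le_trans hasym_le (le_trans hbridge ?_)
    exact hasym_ge t _ (cliqueMinusMatching m) (by omega)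
  refine ⟨claim1, claim2, ?_⟩
  -- Claim 3
  intro H' hne he
  rw [← hμdef]
  calc (Nat.card H'.edgeSet : ℝ)/((Nat.card H'.verts : ℝ)-2+1/μ)
      < ((n:ℝ)*((n:ℝ)-1)/2)/((n:ℝ)-2+1/μ) := (helem H' he).2 hne
    _ ≤ m2Asym (⊤ : SimpleGraph (Fin n)) (cliqueMinusMatching s) := by
        have := hasym_ge n _ (cliqueMinusMatching s) (by omega)
        rw [← hμdef] at this
        exact this
end

section
/- Let G be as in the context (a tree T with at least 4 vertices plus an apex-type vertex v satisfying conditions (a) and (b)). Then G has chromatic number exactly 3. -/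
open SimpleGraph Filter

lemma tree_two_coloring {V : Type*} (T : SimpleGraph V) (hT : T.IsTree) :
    ∃ c : V → Bool, ∀ a b, T.Adj a b → c a ≠ c b := by
  classical
  obtain ⟨r⟩ := hT.isConnected.nonempty
  choose p hp hup using fun a => hT.existsUnique_path r a
  refine ⟨fun a => decide (Odd (p a).length), ?_⟩
  intro a b hab
  have key : (p b).length = (p a).length + 1 ∨ (p a).length = (p b).length + 1 := by
    by_cases hb : b ∈ (p a).support
    · right
      have hdrop : ((p a).dropUntil b hb).IsPath := (hp a).dropUntil hb
      have h1 : ((p a).dropUntil b hb) = (SimpleGraph.Path.singleton hab.symm : T.Walk b a) := by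
        have := hT.IsAcyclic.path_unique ⟨(p a).dropUntil b hb, hdrop⟩
          (SimpleGraph.Path.singleton hab.symm)
        exact congrArg Subtype.val this
      have htake : ((p a).takeUntil b hb) = p b :=
        hup b _ ((hp a).takeUntil hb)
      have hspec := congrArg Walk.length ((p a).take_spec hb)
      rw [Walk.length_append, htake, h1] at hspec
      simp [SimpleGraph.Path.singleton] at hspec
      omega
    · left
      have hq : (Walk.cons hab.symm ((p a).reverse)).IsPath := by
        apply (hp a).reverse.cons
        simpa using hb
      have := hup b _ hq.reverse
      have hl := congrArg Walk.length this
      simp at hl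
      omega
  simp only [ne_eq, decide_eq_decide]
  rcases key with h | h <;> rw [h, Nat.odd_add_one] <;> tauto

theorem stmt15 {VT : Type*} [Fintype VT] (T : SimpleGraph VT) (hT : T.IsTree)
    (hcard : 4 ≤ Fintype.card VT) (S : Set VT)
    -- (a) no proper 2-coloring of `T` makes all of `N_G(v) = S` monochromatic
    (ha : ¬ ∃ c : VT → Bool, (∀ a b, T.Adj a b → c a ≠ c b) ∧
      ∃ col : Bool, ∀ a ∈ S, c a = col)
    -- (b) some `u ∈ S` and proper 2-coloring of `T` make `S \\ {u}` monochromatic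
    (hb : ∃ u ∈ S, ∃ c : VT → Bool, (∀ a b, T.Adj a b → c a ≠ c b) ∧
      ∃ col : Bool, ∀ a ∈ S, a ≠ u → c a = col) :
    (apexGraph T S).chromaticNumber = (3 : ℕ∞) := by
  classical
  obtain ⟨c, hcp⟩ := tree_two_coloring T hT
  have hc3 : (apexGraph T S).Colorable 3 := by
    refine ⟨Coloring.mk
      (fun x => match x with | none => 2 | some a => if c a then 0 else 1) ?_⟩
    intro x y hxy
    rw [apexGraph, fromRel_adj] at hxy
    obtain ⟨hne, h | h⟩ := hxy <;>
      rcases h with ⟨a, b, rfl, rfl, hab⟩ | ⟨rfl, a, ha', rfl⟩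
    · have := hcp a b hab
      by_cases h1 : c a <;> by_cases h2 : c b <;> simp_all <;> decide
    · by_cases h1 : c a <;> simp [h1] <;> decide
    · have := hcp a b hab
      by_cases h1 : c a <;> by_cases h2 : c b <;> simp_all <;> decide
    · by_cases h1 : c a <;> simp [h1] <;> decide
  have hc2 : ¬ (apexGraph T S).Colorable 2 := by
    rintro ⟨C⟩
    apply ha
    refine ⟨fun a => decide (C (some a) = 0), ?_, decide (¬ C none = 0), ?_⟩
    · intro a b hab
      have hadj : (apexGraph T S).Adj (some a) (some b) := by
        rw [apexGraph, fromRel_adj]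
        exact ⟨by simpa using hab.ne, Or.inl (Or.inl ⟨a, b, rfl, rfl, hab⟩)⟩
      have hv := C.valid hadj
      simp only [ne_eq, decide_eq_decide]
      intro h
      exact hv ((by decide : ∀ x y : Fin 2, (x = 0 ↔ y = 0) → x = y) _ _ h)
    · intro a haS
      have hadj : (apexGraph T S).Adj none (some a) := by
        rw [apexGraph, fromRel_adj]
        exact ⟨by simp, Or.inl (Or.inr ⟨rfl, a, haS, rfl⟩)⟩
      have hne := C.valid hadj
      simp only [decide_eq_decide]
      exact (by decide : ∀ x y : Fin 2, x ≠ y → (y = 0 ↔ ¬ x = 0)) _ _ hne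
  have hle : (apexGraph T S).chromaticNumber ≤ 3 := by
    have := hc3.chromaticNumber_le
    exact_mod_cast this
  have hlt : (2 : ℕ∞) < (apexGraph T S).chromaticNumber := by
    by_contra h
    push_neg at h
    exact hc2 (chromaticNumber_le_iff_colorable.mp (by exact_mod_cast h))
  refine le_antisymm hle ?_
  have := Order.add_one_le_of_lt hlt
  norm_num at this
  exact this
end
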